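/- Frink's theorem: A T1 topological space X is completely regular if and only if it has a base B satisfying: (1) if x ∈ U ∈ B then there exists V ∈ B with x ∉ V and U ∪ V = X; (2) if U, V ∈ B and U ∪ V = X, then there exist disjoint M, N ∈ B with X \ U ⊆ M and X \ V ⊆ N. -/

import Mathlib

open Set Topology

/-- The equivalence relation identifying points lying in exactly the same members of `P`. -/
def pSetoid {X : Type*} (P : Set (Set X)) : Setoid X where
  r x y := ∀ V ∈ P, x ∈ V ↔ y ∈ V
  iseqv := ⟨fun _ _ _ => Iff.rfl, fun h V hV => (h V hV).symm,
    fun h1 h2 V hV => (h1 V hV).trans (h2 V hV)⟩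

/-- The quotient `X/P`. -/
def pQuot {X : Type*} (P : Set (Set X)) : Type _ := Quotient (pSetoid P)

/-- The `Q_P`-map `q : X → X/P`. -/
def pMap {X : Type*} (P : Set (Set X)) : X → pQuot P := Quotient.mk (pSetoid P)

/-- The `Q_P`-topology on `X/P`, generated by the images `q[V]`, `V ∈ P`. -/
def pTop {X : Type*} (P : Set (Set X)) : TopologicalSpace (pQuot P) :=
  TopologicalSpace.generateFrom {S | ∃ V ∈ P, S = pMap P '' V}

/-- `R_seq`: sets `W` that are unions `⋃ₙ Uₙ` with `Uₖ ⊆ X \ Vₖ ⊆ Uₖ₊₁`, `Uₙ, Vₙ ∈ R`. -/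
def seqFam {X : Type*} (R : Set (Set X)) : Set (Set X) :=
  {W | ∃ U V : ℕ → Set X, (∀ n, U n ∈ R) ∧ (∀ n, V n ∈ R) ∧
    (∀ k, U k ⊆ (V k)ᶜ ∧ (V k)ᶜ ⊆ U (k + 1)) ∧ (⋃ n, U n) = W}

/-- The family of cozero sets of `X`. -/
def cozeroFam (X : Type*) [TopologicalSpace X] : Set (Set X) :=
  {W | ∃ f : X → ℝ, Continuous f ∧ (∀ x, f x ∈ Set.Icc (0 : ℝ) 1) ∧ W = f ⁻¹' Set.Ioc 0 1}

/-- A skeletal map: a continuous surjection such that the closure of the image of every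
nonempty open set has nonempty interior. -/
def IsSkeletal {X Y : Type*} [TopologicalSpace X] [TopologicalSpace Y] (f : X → Y) : Prop :=
  Continuous f ∧ Function.Surjective f ∧
    ∀ U : Set X, IsOpen U → U.Nonempty → (interior (closure (f '' U))).Nonempty

/-- A skeletal family of open subsets of `X`. -/
def SkeletalFamily {X : Type*} [TopologicalSpace X] (P : Set (Set X)) : Prop :=
  ∀ V : Set X, IsOpen V → V.Nonempty →
    ∃ W ∈ P, ∀ U ∈ P, U ⊆ W → U.Nonempty → (U ∩ V).Nonempty

/-- A π-base: a family of nonempty open sets such that every nonempty open set contains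
a member of the family. -/
def IsPiBase {Y : Type*} [TopologicalSpace Y] (B : Set (Set Y)) : Prop :=
  (∀ b ∈ B, IsOpen b ∧ b.Nonempty) ∧ ∀ U : Set Y, IsOpen U → U.Nonempty → ∃ b ∈ B, b ⊆ U

/-- A strategy for Player I in the open-open game produces nonempty open sets. -/
def ValidStrategy {X : Type*} [TopologicalSpace X] (σ : List (Set X) → Set X) : Prop :=
  ∀ l : List (Set X), IsOpen (σ l) ∧ (σ l).Nonempty

/-- `B` is a play of Player II against the strategy `σ` of Player I: each `B n` is a
nonempty open subset of the set produced by `σ` from the previous moves of Player II. -/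
def IsPlayAgainst {X : Type*} [TopologicalSpace X] (σ : List (Set X) → Set X)
    (B : ℕ → Set X) : Prop :=
  ∀ n, IsOpen (B n) ∧ (B n).Nonempty ∧ B n ⊆ σ (List.ofFn (fun i : Fin n => B i))

/-- A winning strategy for Player I in the open-open game: every play of Player II against
it has dense union. -/
def WinningStrategy {X : Type*} [TopologicalSpace X] (σ : List (Set X) → Set X) : Prop :=
  ValidStrategy σ ∧ ∀ B : ℕ → Set X, IsPlayAgainst σ B → Dense (⋃ n, B n)

/-- A space is I-favorable if Player I has a winning strategy in the open-open game. -/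
def IFavorable (X : Type*) [TopologicalSpace X] : Prop :=
  ∃ σ : List (Set X) → Set X, WinningStrategy σ

/-- `P` is closed under the strategy `σ`. -/
def ClosedUnderStrategy {X : Type*} [TopologicalSpace X] (P : Set (Set X))
    (σ : List (Set X) → Set X) : Prop :=
  σ [] ∈ P ∧ ∀ l : List (Set X), (∀ b ∈ l, b ∈ P) → σ l ∈ P

/-- The limit of an inverse system, as the subspace of threads in the product. -/
abbrev invLimit {ι : Type*} [Preorder ι] (Y : ι → Type*)
    (bond : ∀ i j : ι, i ≤ j → Y j → Y i) : Type _ :=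
  {u : ∀ i, Y i // ∀ (i j : ι) (h : i ≤ j), bond i j h (u j) = u i}

/-- The topology of the inverse limit, with explicitly given topologies on factors. -/
def invLimitTop {ι : Type*} [Preorder ι] (Y : ι → Type*) (t : ∀ i, TopologicalSpace (Y i))
    (bond : ∀ i j : ι, i ≤ j → Y j → Y i) : TopologicalSpace (invLimit Y bond) :=
  @instTopologicalSpaceSubtype _ _ (@Pi.topologicalSpace ι Y t)

/-- σ-completeness of an inverse system: each countable chain of indices has a least upper
bound `l`, and the canonical map from `Y l` to the limit of the countable subsystem is a
homeomorphism (an embedding whose range is the set of threads). -/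
def SigmaComplete {ι : Type*} [Preorder ι] (Y : ι → Type*) (t : ∀ i, TopologicalSpace (Y i))
    (bond : ∀ i j : ι, i ≤ j → Y j → Y i) : Prop :=
  (∀ s : ℕ → ι, Monotone s → ∃ l, IsLUB (Set.range s) l) ∧
  ∀ (s : ℕ → ι) (hs : Monotone s) (l : ι) (hl : IsLUB (Set.range s) l),
    @IsEmbedding (Y l) (∀ n, Y (s n)) (t l) (@Pi.topologicalSpace ℕ _ (fun n => t (s n)))
      (fun x n => bond (s n) l (hl.1 (Set.mem_range_self n)) x) ∧
    Set.range (fun (x : Y l) (n : ℕ) => bond (s n) l (hl.1 (Set.mem_range_self n)) x) =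
      {u : ∀ n, Y (s n) | ∀ (n m : ℕ) (h : n ≤ m), bond (s n) (s m) (hs h) (u m) = u n}

/-- A σ-complete inverse system of topological spaces over a directed partial order,
with continuous surjective bonding maps. -/
structure TopInvSystem : Type 1 where
  ι : Type
  [ord : PartialOrder ι]
  directed : IsDirected ι (· ≤ ·)
  Y : ι → Type
  [t : ∀ i, TopologicalSpace (Y i)]
  bond : ∀ i j : ι, i ≤ j → Y j → Y i
  bond_refl : ∀ i (x : Y i), bond i i le_rfl x = x
  bond_comp : ∀ (i j k : ι) (hij : i ≤ j) (hjk : j ≤ k) (x : Y k),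
    bond i j hij (bond j k hjk x) = bond i k (hij.trans hjk) x
  bond_cont : ∀ (i j : ι) (h : i ≤ j), Continuous (bond i j h)
  bond_surj : ∀ (i j : ι) (h : i ≤ j), Function.Surjective (bond i j h)
  sigmaComplete : SigmaComplete Y t bond

instance (S : TopInvSystem) : PartialOrder S.ι := S.ord
instance (S : TopInvSystem) (i : S.ι) : TopologicalSpace (S.Y i) := S.t i

/-- The limit of a `TopInvSystem`. -/
def TopInvSystem.Limit (S : TopInvSystem) : Type := invLimit S.Y S.bond

instance (S : TopInvSystem) : TopologicalSpace S.Limit :=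
  inferInstanceAs (TopologicalSpace (invLimit S.Y S.bond))

/-- The bonding map `X/R → X/P` for `P ⊆ R`, sending `[x]_R` to `[x]_P`. -/
def pBond {X : Type*} (P R : Set (Set X)) (h : P ⊆ R) : pQuot R → pQuot P :=
  Quotient.lift (pMap P) (fun _ _ hab => Quotient.sound (fun V hV => hab V (h hV)))

/-- A `T`-club on a space `X` (with `T` the cozero sets): a collection of countable
subfamilies of `T`, each closed under a fixed winning strategy for Player I, closed under
finite unions and intersections, contained in its `seq`-family, which is cofinal among
countable subfamilies of `T` and closed under countable chains. -/
def TClub {X : Type*} [TopologicalSpace X] (C : Set (Set (Set X))) : Prop :=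
  ∃ σ : List (Set X) → Set X, WinningStrategy σ ∧
    (∀ P ∈ C, P.Countable ∧ P ⊆ cozeroFam X ∧ ClosedUnderStrategy P σ ∧
      (∀ A ∈ P, ∀ B ∈ P, A ∪ B ∈ P ∧ A ∩ B ∈ P) ∧ P ⊆ seqFam P) ∧
    (∀ Q : Set (Set X), Q.Countable → Q ⊆ cozeroFam X → ∃ P ∈ C, Q ⊆ P) ∧
    (∀ f : ℕ → Set (Set X), (∀ n, f n ∈ C) → Monotone f → (⋃ n, f n) ∈ C)

namespace FrinkAux

open Set

variable {X : Type*} [TopologicalSpace X] {B : Set (Set X)}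

structure CU {X : Type*} [TopologicalSpace X] (B : Set (Set X)) where
  a : Set X
  u : Set X
  ha : a ∈ B
  hu : u ∈ B
  cover : a ∪ u = Set.univ
  hopen : ∀ V ∈ B, IsOpen V
  hB2 : ∀ U ∈ B, ∀ V ∈ B, U ∪ V = Set.univ →
    ∃ M ∈ B, ∃ N ∈ B, M ∩ N = ∅ ∧ Uᶜ ⊆ M ∧ Vᶜ ⊆ N

namespace CU

def C (c : CU B) : Set X := c.aᶜ
def U (c : CU B) : Set X := c.u

lemma closed_C (c : CU B) : IsClosed c.C := (c.hopen _ c.ha).isClosed_compl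
lemma open_U (c : CU B) : IsOpen c.U := c.hopen _ c.hu
lemma subset (c : CU B) : c.C ⊆ c.U := Set.compl_subset_iff_union.mpr c.cover

lemma ex (c : CU B) : ∃ M ∈ B, ∃ N ∈ B, M ∩ N = ∅ ∧ c.aᶜ ⊆ M ∧ c.uᶜ ⊆ N :=
  c.hB2 c.a c.ha c.u c.hu c.cover

noncomputable def M (c : CU B) : Set X := c.ex.choose
lemma hM (c : CU B) : c.M ∈ B := c.ex.choose_spec.1
noncomputable def N (c : CU B) : Set X := c.ex.choose_spec.2.choose
lemma hN (c : CU B) : c.N ∈ B := c.ex.choose_spec.2.choose_spec.1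
lemma MN_disj (c : CU B) : c.M ∩ c.N = ∅ := c.ex.choose_spec.2.choose_spec.2.1
lemma C_sub_M (c : CU B) : c.aᶜ ⊆ c.M := c.ex.choose_spec.2.choose_spec.2.2.1
lemma Ucompl_sub_N (c : CU B) : c.uᶜ ⊆ c.N := c.ex.choose_spec.2.choose_spec.2.2.2

noncomputable def left (c : CU B) : CU B :=
  ⟨c.a, c.M, c.ha, c.hM, Set.compl_subset_iff_union.mp c.C_sub_M, c.hopen, c.hB2⟩

noncomputable def right (c : CU B) : CU B :=
  ⟨c.N, c.u, c.hN, c.hu,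
    by rw [Set.union_comm]; exact Set.compl_subset_iff_union.mp c.Ucompl_sub_N,
    c.hopen, c.hB2⟩

@[simp] lemma left_C (c : CU B) : c.left.C = c.C := rfl
@[simp] lemma right_U (c : CU B) : c.right.U = c.U := rfl

theorem left_U_subset_right_C (c : CU B) : c.left.U ⊆ c.right.C :=
  Set.subset_compl_iff_disjoint_right.mpr (Set.disjoint_iff_inter_eq_empty.mpr c.MN_disj)

theorem left_U_subset (c : CU B) : c.left.U ⊆ c.U :=
  Subset.trans c.left_U_subset_right_C c.right.subset

theorem subset_right_C (c : CU B) : c.C ⊆ c.right.C :=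
  Subset.trans c.left.subset c.left_U_subset_right_C

noncomputable def approx : ℕ → CU B → X → ℝ
  | 0, c, x => indicator c.Uᶜ 1 x
  | n + 1, c, x => midpoint ℝ (approx n c.left x) (approx n c.right x)

theorem approx_of_mem_C (c : CU B) (n : ℕ) {x : X} (hx : x ∈ c.C) : c.approx n x = 0 := by
  induction n generalizing c with
  | zero => exact indicator_of_notMem (fun (hU : x ∈ c.Uᶜ) => hU <| c.subset hx) _
  | succ n ihn =>
    simp only [approx]
    rw [ihn, ihn, midpoint_self]
    exacts [c.subset_right_C hx, hx]

theorem approx_of_nmem_U (c : CU B) (n : ℕ) {x : X} (hx : x ∉ c.U) : c.approx n x = 1 := by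
  induction n generalizing c with
  | zero =>
    rw [← mem_compl_iff] at hx
    exact indicator_of_mem hx _
  | succ n ihn =>
    simp only [approx]
    rw [ihn, ihn, midpoint_self]
    exacts [hx, fun hU => hx <| c.left_U_subset hU]

theorem approx_nonneg (c : CU B) (n : ℕ) (x : X) : 0 ≤ c.approx n x := by
  induction n generalizing c with
  | zero => exact indicator_nonneg (fun _ _ => zero_le_one) _
  | succ n ihn =>
    simp only [approx, midpoint_eq_smul_add, invOf_eq_inv]
    refine mul_nonneg (inv_nonneg.2 zero_le_two) (add_nonneg ?_ ?_) <;> apply ihn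

theorem approx_le_one (c : CU B) (n : ℕ) (x : X) : c.approx n x ≤ 1 := by
  induction n generalizing c with
  | zero => exact indicator_apply_le' (fun _ => le_rfl) fun _ => zero_le_one
  | succ n ihn =>
    simp only [approx, midpoint_eq_smul_add, invOf_eq_inv, smul_eq_mul, ← div_eq_inv_mul]
    have := add_le_add (ihn (left c)) (ihn (right c))
    norm_num at this
    exact Iff.mpr (div_le_one zero_lt_two) this

theorem bddAbove_range_approx (c : CU B) (x : X) : BddAbove (range fun n => c.approx n x) :=
  ⟨1, fun _ ⟨n, hn⟩ => hn ▸ c.approx_le_one n x⟩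

theorem approx_le_approx_of_U_sub_C {c₁ c₂ : CU B} (h : c₁.U ⊆ c₂.C) (n₁ n₂ : ℕ) (x : X) :
    c₂.approx n₂ x ≤ c₁.approx n₁ x := by
  by_cases hx : x ∈ c₁.U
  · calc
      approx n₂ c₂ x = 0 := approx_of_mem_C _ _ (h hx)
      _ ≤ approx n₁ c₁ x := approx_nonneg _ _ _
  · calc
      approx n₂ c₂ x ≤ 1 := approx_le_one _ _ _
      _ = approx n₁ c₁ x := (approx_of_nmem_U _ _ hx).symm

theorem approx_mem_Icc_right_left (c : CU B) (n : ℕ) (x : X) :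
    c.approx n x ∈ Icc (c.right.approx n x) (c.left.approx n x) := by
  induction' n with n ihn generalizing c
  · exact ⟨le_rfl, indicator_le_indicator_of_subset (compl_subset_compl.2 c.left_U_subset)
      (fun _ => zero_le_one) _⟩
  · simp only [approx, mem_Icc]
    refine ⟨midpoint_le_midpoint ?_ (ihn _).1, midpoint_le_midpoint (ihn _).2 ?_⟩ <;>
      apply approx_le_approx_of_U_sub_C
    exacts [c.left_U_subset_right_C, c.left_U_subset_right_C]

theorem approx_le_succ (c : CU B) (n : ℕ) (x : X) : c.approx n x ≤ c.approx (n + 1) x := by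
  induction' n with n ihn generalizing c
  · simp only [approx, right_U, right_le_midpoint]
    exact (approx_mem_Icc_right_left c 0 x).2
  · rw [approx, approx]
    exact midpoint_le_midpoint (ihn _) (ihn _)

theorem approx_mono (c : CU B) (x : X) : Monotone fun n => c.approx n x :=
  monotone_nat_of_le_succ fun n => c.approx_le_succ n x

protected noncomputable def lim (c : CU B) (x : X) : ℝ :=
  ⨆ n, c.approx n x

theorem tendsto_approx_atTop (c : CU B) (x : X) :
    Filter.Tendsto (fun n => c.approx n x) Filter.atTop (nhds <| c.lim x) :=
  tendsto_atTop_ciSup (c.approx_mono x) ⟨1, fun _ ⟨_, hn⟩ => hn ▸ c.approx_le_one _ _⟩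

theorem lim_of_mem_C (c : CU B) (x : X) (h : x ∈ c.C) : c.lim x = 0 := by
  simp only [CU.lim, approx_of_mem_C, h, ciSup_const]

theorem lim_of_nmem_U (c : CU B) (x : X) (h : x ∉ c.U) : c.lim x = 1 := by
  simp only [CU.lim, approx_of_nmem_U c _ h, ciSup_const]

theorem lim_eq_midpoint (c : CU B) (x : X) :
    c.lim x = midpoint ℝ (c.left.lim x) (c.right.lim x) := by
  refine tendsto_nhds_unique (c.tendsto_approx_atTop x) ((Filter.tendsto_add_atTop_iff_nat 1).1 ?_)
  simp only [approx]
  exact (c.left.tendsto_approx_atTop x).midpoint (c.right.tendsto_approx_atTop x)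

theorem approx_le_lim (c : CU B) (x : X) (n : ℕ) : c.approx n x ≤ c.lim x :=
  le_ciSup (c.bddAbove_range_approx x) _

theorem lim_nonneg (c : CU B) (x : X) : 0 ≤ c.lim x :=
  (c.approx_nonneg 0 x).trans (c.approx_le_lim x 0)

theorem lim_le_one (c : CU B) (x : X) : c.lim x ≤ 1 :=
  ciSup_le fun _ => c.approx_le_one _ _

theorem lim_mem_Icc (c : CU B) (x : X) : c.lim x ∈ Icc (0 : ℝ) 1 :=
  ⟨c.lim_nonneg x, c.lim_le_one x⟩

theorem continuous_lim (c : CU B) : Continuous c.lim := by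
  obtain ⟨h0, h1234, h1⟩ : 0 < (2⁻¹ : ℝ) ∧ (2⁻¹ : ℝ) < 3 / 4 ∧ (3 / 4 : ℝ) < 1 := by norm_num
  refine
    continuous_iff_continuousAt.2 fun x =>
      (Metric.nhds_basis_closedBall_pow (h0.trans h1234) h1).tendsto_right_iff.2 fun n _ => ?_
  simp only [Metric.mem_closedBall]
  induction' n with n ihn generalizing c
  · filter_upwards with y
    rw [pow_zero]
    exact Real.dist_le_of_mem_Icc_01 (c.lim_mem_Icc _) (c.lim_mem_Icc _)
  · by_cases hxl : x ∈ c.left.U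
    · filter_upwards [IsOpen.mem_nhds c.left.open_U hxl, ihn c.left] with _ hyl hyd
      rw [pow_succ', c.lim_eq_midpoint, c.lim_eq_midpoint,
        c.right.lim_of_mem_C _ (c.left_U_subset_right_C hyl),
        c.right.lim_of_mem_C _ (c.left_U_subset_right_C hxl)]
      refine (dist_midpoint_midpoint_le _ _ _ _).trans ?_
      rw [dist_self, add_zero, div_eq_inv_mul]
      gcongr
    · replace hxl : x ∈ c.left.right.Cᶜ :=
        compl_subset_compl.2 c.left.right.subset hxl
      filter_upwards [IsOpen.mem_nhds (isOpen_compl_iff.2 c.left.right.closed_C) hxl,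
        ihn c.left.right, ihn c.right] with y hyl hydl hydr
      replace hxl : x ∉ c.left.left.U :=
        compl_subset_compl.2 c.left.left_U_subset_right_C hxl
      replace hyl : y ∉ c.left.left.U :=
        compl_subset_compl.2 c.left.left_U_subset_right_C hyl
      simp only [pow_succ, c.lim_eq_midpoint, c.left.lim_eq_midpoint,
        c.left.left.lim_of_nmem_U _ hxl, c.left.left.lim_of_nmem_U _ hyl]
      refine (dist_midpoint_midpoint_le _ _ _ _).trans ?_
      refine (div_le_div_of_nonneg_right (add_le_add_left (dist_midpoint_midpoint_le _ _ _ _) _)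
        zero_le_two).trans ?_
      rw [dist_self, zero_add]
      set r := (3 / 4 : ℝ) ^ n
      calc _ ≤ (r / 2 + r) / 2 := by gcongr
        _ = _ := by field_simp; ring

end CU

end FrinkAux


open unitInterval in
theorem stmt7 {X : Type*} [TopologicalSpace X] [T1Space X] :
    CompletelyRegularSpace X ↔
      ∃ B : Set (Set X), TopologicalSpace.IsTopologicalBasis B ∧
        (∀ U ∈ B, ∀ x ∈ U, ∃ V ∈ B, x ∉ V ∧ U ∪ V = Set.univ) ∧
        (∀ U ∈ B, ∀ V ∈ B, U ∪ V = Set.univ →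
          ∃ M ∈ B, ∃ N ∈ B, M ∩ N = ∅ ∧ Uᶜ ⊆ M ∧ Vᶜ ⊆ N) := by
  have hmax : ∀ a b : ℝ, max (a - b) 0 ≠ 0 ↔ b < a := by
    intro a b
    rcases le_or_gt a b with h | h
    · simp [max_eq_right (sub_nonpos.mpr h), h.not_gt]
    · simp [max_eq_left (sub_pos.mpr h).le, (sub_pos.mpr h).ne', h]
  constructor
  · intro hcr
    refine ⟨{s : Set X | ∃ f : X → ℝ, Continuous f ∧ s = {y | f y ≠ 0}}, ?_, ?_, ?_⟩
    · refine TopologicalSpace.isTopologicalBasis_of_isOpen_of_nhds ?_ ?_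
      · rintro s ⟨f, hf, rfl⟩
        exact isOpen_ne.preimage hf
      · intro a W haW hW
        obtain ⟨g, hg, hga, hg1⟩ :=
          hcr.completely_regular a Wᶜ hW.isClosed_compl (by simpa using haW)
        refine ⟨{y | (1 : ℝ) - (g y : ℝ) ≠ 0}, ⟨fun y => 1 - (g y : ℝ),
          continuous_const.sub (continuous_subtype_val.comp hg), rfl⟩, ?_, ?_⟩
        · simp [hga]
        · intro y hy
          by_contra hyW
          have := hg1 (hyW : y ∈ Wᶜ)
          simp only [Pi.one_apply] at this
          simp [this] at hy
    · rintro U ⟨f, hf, rfl⟩ x hx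
      have hUopen : IsOpen {y | f y ≠ 0} := isOpen_ne.preimage hf
      obtain ⟨g, hg, hgx, hg1⟩ :=
        hcr.completely_regular x {y | f y ≠ 0}ᶜ hUopen.isClosed_compl (by simpa using hx)
      refine ⟨{y | (g y : ℝ) ≠ 0}, ⟨fun y => (g y : ℝ),
        continuous_subtype_val.comp hg, rfl⟩, ?_, ?_⟩
      · simp [hgx]
      · rw [Set.eq_univ_iff_forall]
        intro y
        by_cases hy : f y ≠ 0
        · exact Or.inl hy
        · refine Or.inr ?_
          have := hg1 (by simpa using hy : y ∈ {y | f y ≠ 0}ᶜ)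
          simp only [Pi.one_apply] at this
          simp [this]
    · rintro U ⟨f, hf, rfl⟩ V ⟨g, hg, rfl⟩ hUV
      refine ⟨{y | max (|g y| - |f y|) 0 ≠ 0}, ⟨fun y => max (|g y| - |f y|) 0,
          (hg.abs.sub hf.abs).max continuous_const, rfl⟩,
        {y | max (|f y| - |g y|) 0 ≠ 0}, ⟨fun y => max (|f y| - |g y|) 0,
          (hf.abs.sub hg.abs).max continuous_const, rfl⟩, ?_, ?_, ?_⟩
      · ext y
        simp only [Set.mem_inter_iff, Set.mem_setOf_eq, hmax, Set.mem_empty_iff_false, iff_false,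
          not_and]
        intro h1
        exact (lt_asymm h1)
      · intro y hy
        simp only [Set.mem_compl_iff, Set.mem_setOf_eq, not_not] at hy
        have hyV : g y ≠ 0 := by
          have := (Set.eq_univ_iff_forall.mp hUV) y
          rcases this with h | h
          · exact absurd hy (by simpa using h)
          · exact h
        simp only [Set.mem_setOf_eq, hmax, hy, abs_zero]
        exact abs_pos.mpr hyV
      · intro y hy
        simp only [Set.mem_compl_iff, Set.mem_setOf_eq, not_not] at hy
        have hyU : f y ≠ 0 := by
          have := (Set.eq_univ_iff_forall.mp hUV) y
          rcases this with h | h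
          · exact h
          · exact absurd hy (by simpa using h)
        simp only [Set.mem_setOf_eq, hmax, hy, abs_zero]
        exact abs_pos.mpr hyU
  · rintro ⟨B, hbasis, h1, h2⟩
    refine ⟨fun x K hK hxK => ?_⟩
    obtain ⟨U, hUB, hxU, hUK⟩ := hbasis.exists_subset_of_mem_open (by simpa using hxK)
      hK.isOpen_compl
    obtain ⟨V, hVB, hxV, hcov⟩ := h1 U hUB x hxU
    let c : FrinkAux.CU B :=
      ⟨V, U, hVB, hUB, by rw [Set.union_comm]; exact hcov,
        fun W hW => hbasis.isOpen hW, h2⟩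
    refine ⟨fun y => ⟨c.lim y, c.lim_mem_Icc y⟩, ?_, ?_, ?_⟩
    · exact Continuous.subtype_mk c.continuous_lim _
    · exact Subtype.ext (by simpa using c.lim_of_mem_C x hxV)
    · intro y hy
      refine Subtype.ext ?_
      have : y ∉ c.U := fun h => (hUK h) hy
      simpa using c.lim_of_nmem_U y this
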